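/- Suppose ‖x_i‖_1 ≤ R for all i ∈ {1,…,n}, where R > 0, and that n = m·b for integers m ≥ 1 and b ≥ 1. Fix W ∈ ℝ^{k×d}, β ∈ [0,1), and t ∈ ℕ. Let B_0, …, B_t ⊆ {1,…,n} be batches, each of size b, such that for every completed epoch k with 0 ≤ k ≤ ⌊t/m⌋ − 1, the batches B_{km}, B_{km+1}, …, B_{(k+1)m−1} are pairwise disjoint and their union is {1,…,n}. Define Ξ_j = (1/b)∑_{i∈B_j} g_i(W) − D(W). Then the exponentially weighted accumulated error satisfies ‖∑_{j=0}^{t} (1−β) β^{t−j} Ξ_j‖_1 ≤ (1−β) m (m² − 1) R · G(W). -/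

import Mathlib

open Finset Filter

/-- Softmax map on `ℝ^k`. -/
noncomputable def softmax {k : ℕ} (z : Fin k → ℝ) (c : Fin k) : ℝ :=
  Real.exp (z c) / ∑ j, Real.exp (z j)

/-- Logits `W x` of a linear classifier `W : ℝ^{k×d}` on input `x : ℝ^d`. -/
noncomputable def logits {k d : ℕ} (W : Fin k → Fin d → ℝ) (x : Fin d → ℝ) : Fin k → ℝ :=
  fun c => ∑ j, W c j * x j

/-- Cross-entropy loss `L(W) = -(1/n) ∑ᵢ log S_{yᵢ}(W xᵢ)`. -/
noncomputable def lossCE {n k d : ℕ} (x : Fin n → Fin d → ℝ) (y : Fin n → Fin k)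
    (W : Fin k → Fin d → ℝ) : ℝ :=
  -((1 : ℝ) / n) * ∑ i, Real.log (softmax (logits W (x i)) (y i))

/-- Proxy function `G(W) = (1/n) ∑ᵢ (1 - S_{yᵢ}(W xᵢ))`. -/
noncomputable def proxyG {n k d : ℕ} (x : Fin n → Fin d → ℝ) (y : Fin n → Fin k)
    (W : Fin k → Fin d → ℝ) : ℝ :=
  ((1 : ℝ) / n) * ∑ i, (1 - softmax (logits W (x i)) (y i))

/-- Per-sample gradient matrix `gᵢ(W) = (S(W xᵢ) - e_{yᵢ}) xᵢᵀ`. -/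
noncomputable def sampleGrad {k d : ℕ} (x : Fin d → ℝ) (y : Fin k)
    (W : Fin k → Fin d → ℝ) : Fin k → Fin d → ℝ :=
  fun c j => (softmax (logits W x) c - (if c = y then 1 else 0)) * x j

/-- Full gradient matrix `D(W) = (1/n) ∑ᵢ gᵢ(W)`. -/
noncomputable def gradCE {n k d : ℕ} (x : Fin n → Fin d → ℝ) (y : Fin n → Fin k)
    (W : Fin k → Fin d → ℝ) : Fin k → Fin d → ℝ :=
  fun c j => ((1 : ℝ) / n) * ∑ i, sampleGrad (x i) (y i) W c j

/-- Entry-wise 1-norm of a matrix. -/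
noncomputable def norm1M {k d : ℕ} (A : Fin k → Fin d → ℝ) : ℝ :=
  ∑ c, ∑ j, |A c j|

/-- 1-norm of a vector. -/
noncomputable def norm1V {d : ℕ} (v : Fin d → ℝ) : ℝ := ∑ j, |v j|

/-- `min_{c ≠ y} (e_y - e_c)ᵀ A x`. -/
noncomputable def marginMin {k d : ℕ} (hk : 2 ≤ k) (A : Fin k → Fin d → ℝ)
    (x : Fin d → ℝ) (y : Fin k) : ℝ :=
  (Finset.univ.erase y).inf'
    (by
      obtain ⟨cne, hcne⟩ := Fintype.exists_ne_of_one_lt_card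
        (by simpa using (by omega : 1 < k)) y
      exact ⟨cne, Finset.mem_erase.mpr ⟨hcne, Finset.mem_univ _⟩⟩)
    (fun c => logits A x y - logits A x c)

/-- `min_{i ∈ [n], c ≠ yᵢ} (e_{yᵢ} - e_c)ᵀ W xᵢ`. -/
noncomputable def dataMargin {n k d : ℕ} (hn : 1 ≤ n) (hk : 2 ≤ k)
    (x : Fin n → Fin d → ℝ) (y : Fin n → Fin k) (W : Fin k → Fin d → ℝ) : ℝ :=
  Finset.univ.inf' ⟨⟨0, by omega⟩, Finset.mem_univ _⟩
    (fun i => marginMin hk W (x i) (y i))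

/-- Max margin `γ` over the max-norm unit ball. -/
noncomputable def gammaMax {n k d : ℕ} (hn : 1 ≤ n) (hk : 2 ≤ k)
    (x : Fin n → Fin d → ℝ) (y : Fin n → Fin k) : ℝ :=
  sSup { g : ℝ | ∃ W' : Fin k → Fin d → ℝ, ‖W'‖ ≤ 1 ∧ g = dataMargin hn hk x y W' }

/-- Mini-batch gradient `(1/b) ∑_{i ∈ B} gᵢ(W)`. -/
noncomputable def batchGrad {n k d : ℕ} (x : Fin n → Fin d → ℝ) (y : Fin n → Fin k)
    (B : Finset (Fin n)) (b : ℕ) (W : Fin k → Fin d → ℝ) : Fin k → Fin d → ℝ :=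
  fun c j => ((1 : ℝ) / b) * ∑ i ∈ B, sampleGrad (x i) (y i) W c j

/-- Frobenius norm of a matrix. -/
noncomputable def frobNorm {k d : ℕ} (A : Fin k → Fin d → ℝ) : ℝ :=
  Real.sqrt (∑ c, ∑ j, (A c j) ^ 2)
lemma softmax_pos {k : ℕ} (hk : 0 < k) (z : Fin k → ℝ) (c : Fin k) : 0 < softmax z c := by
  exact div_pos (Real.exp_pos _)
    (Finset.sum_pos (fun j _ => Real.exp_pos _) ⟨⟨0, hk⟩, Finset.mem_univ _⟩)

lemma sum_softmax {k : ℕ} (hk : 0 < k) (z : Fin k → ℝ) : ∑ c, softmax z c = 1 := by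
  unfold softmax
  rw [← Finset.sum_div]
  exact div_self (ne_of_gt (Finset.sum_pos (fun j _ => Real.exp_pos _) ⟨⟨0, hk⟩, Finset.mem_univ _⟩))

lemma softmax_le_one {k : ℕ} (hk : 0 < k) (z : Fin k → ℝ) (c : Fin k) : softmax z c ≤ 1 := by
  have h := sum_softmax hk z
  have h2 := Finset.single_le_sum (f := softmax z) (fun j _ => le_of_lt (softmax_pos hk z j)) (Finset.mem_univ c)
  linarith

lemma norm1M_sum_le {k d : ℕ} {ι : Type*} (s : Finset ι) (F : ι → Fin k → Fin d → ℝ) :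
    norm1M (fun c j => ∑ i ∈ s, F i c j) ≤ ∑ i ∈ s, norm1M (F i) := by
  unfold norm1M
  calc ∑ c, ∑ j, |∑ i ∈ s, F i c j| ≤ ∑ c, ∑ j, ∑ i ∈ s, |F i c j| := by
        gcongr with c _ j _; exact Finset.abs_sum_le_sum_abs _ _
    _ = ∑ c, ∑ i ∈ s, ∑ j, |F i c j| := Finset.sum_congr rfl fun c _ => Finset.sum_comm
    _ = ∑ i ∈ s, ∑ c, ∑ j, |F i c j| := Finset.sum_comm

lemma norm1M_add_le {k d : ℕ} (A C : Fin k → Fin d → ℝ) :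
    norm1M (fun c j => A c j + C c j) ≤ norm1M A + norm1M C := by
  unfold norm1M
  rw [← Finset.sum_add_distrib]
  apply Finset.sum_le_sum; intro c _
  rw [← Finset.sum_add_distrib]
  exact Finset.sum_le_sum fun j _ => abs_add_le _ _

lemma norm1M_smul {k d : ℕ} (a : ℝ) (A : Fin k → Fin d → ℝ) :
    norm1M (fun c j => a * A c j) = |a| * norm1M A := by
  unfold norm1M
  rw [Finset.mul_sum]
  exact Finset.sum_congr rfl fun c _ => by rw [Finset.mul_sum]; exact Finset.sum_congr rfl fun j _ => abs_mul _ _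

lemma sum_range_mul' {M : Type*} [AddCommMonoid M] (f : ℕ → M) (K m : ℕ) :
    ∑ j ∈ Finset.range (K * m), f j = ∑ k ∈ Finset.range K, ∑ l ∈ Finset.range m, f (k * m + l) := by
  induction K with
  | zero => simp
  | succ K ih => rw [Finset.sum_range_succ, ← ih, Nat.succ_mul, Finset.sum_range_add]

lemma one_sub_pow_le' {β : ℝ} (h0 : 0 ≤ β) (h1 : β ≤ 1) (s : ℕ) : 1 - β ^ s ≤ s * (1 - β) := by
  induction s with
  | zero => simp
  | succ s ih =>
    have hβs : β ^ s ≤ 1 := pow_le_one₀ h0 h1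
    rw [pow_succ]
    push_cast
    nlinarith

lemma gauss' (m : ℕ) : ∑ s ∈ Finset.range m, (s : ℝ) = m * (m - 1) / 2 := by
  induction m with
  | zero => simp
  | succ m ih => rw [Finset.sum_range_succ, ih]; push_cast; ring

lemma geom' {β : ℝ} (K : ℕ) : (1 - β) * ∑ u ∈ Finset.range K, β ^ u = 1 - β ^ K := by
  have h := geom_sum_mul β K
  linear_combination -h

lemma norm1M_sampleGrad {k d : ℕ} (hk : 0 < k) (x : Fin d → ℝ) (y : Fin k)
    (W : Fin k → Fin d → ℝ) :
    norm1M (sampleGrad x y W) = 2 * (1 - softmax (logits W x) y) * norm1V x := by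
  unfold norm1M sampleGrad norm1V
  have h1 : ∀ c : Fin k, ∑ j, |(softmax (logits W x) c - (if c = y then 1 else 0)) * x j|
      = |softmax (logits W x) c - if c = y then 1 else 0| * ∑ j, |x j| := by
    intro c; rw [Finset.mul_sum]; exact Finset.sum_congr rfl (fun j _ => abs_mul _ _)
  simp_rw [h1]
  rw [← Finset.sum_mul]
  congr 1
  set S := softmax (logits W x) with hS
  have hsum : ∑ c, S c = 1 := sum_softmax hk _
  rw [← Finset.add_sum_erase _ _ (Finset.mem_univ y)]
  have hy1 : |S y - if y = y then (1:ℝ) else 0| = 1 - S y := by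
    rw [if_pos rfl, abs_of_nonpos (by linarith [softmax_le_one hk (logits W x) y])]
    ring
  have hrest : ∑ c ∈ Finset.univ.erase y, |S c - if c = y then (1:ℝ) else 0|
      = ∑ c ∈ Finset.univ.erase y, S c := by
    apply Finset.sum_congr rfl
    intro c hc
    rw [if_neg (Finset.mem_erase.mp hc).1, sub_zero,
      abs_of_nonneg (le_of_lt (softmax_pos hk _ c))]
  have herase : ∑ c ∈ Finset.univ.erase y, S c = 1 - S y := by
    have := Finset.sum_erase_add Finset.univ S (Finset.mem_univ y)
    linarith
  rw [hy1, hrest, herase]; ring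

lemma xi_bound {n k d : ℕ} (hk : 0 < k) (hn : 0 < n)
    (x : Fin n → Fin d → ℝ) (y : Fin n → Fin k)
    (R : ℝ) (hR : 0 ≤ R) (hx : ∀ i, norm1V (x i) ≤ R)
    (m b : ℕ) (hm : 2 ≤ m) (hb : 1 ≤ b) (hnb : n = m * b)
    (W : Fin k → Fin d → ℝ) (Bs : Finset (Fin n)) :
    norm1M (fun c j => batchGrad x y Bs b W c j - gradCE x y W c j)
      ≤ 2 * ((m : ℝ) - 1) * R * proxyG x y W := by
  have hn0 : (n : ℝ) ≠ 0 := Nat.cast_ne_zero.mpr hn.ne'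
  have hb0 : (b : ℝ) ≠ 0 := Nat.cast_ne_zero.mpr (by omega)
  have hbm : (1 : ℝ) / b = (m : ℝ) / n := by
    rw [div_eq_div_iff hb0 hn0]; rw [hnb]; push_cast; ring
  set a : Fin n → ℝ := fun i => (if i ∈ Bs then (1:ℝ)/b else 0) - 1/n with ha
  have key : ∀ c j, batchGrad x y Bs b W c j - gradCE x y W c j
      = ∑ i, a i * sampleGrad (x i) (y i) W c j := by
    intro c j
    unfold batchGrad gradCE
    have h2 : ∑ i, a i * sampleGrad (x i) (y i) W c j
        = ∑ i, (if i ∈ Bs then (1:ℝ)/b * sampleGrad (x i) (y i) W c j else 0)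
          - ∑ i, (1:ℝ)/n * sampleGrad (x i) (y i) W c j := by
      rw [← Finset.sum_sub_distrib]
      apply Finset.sum_congr rfl
      intro i _
      by_cases h : i ∈ Bs <;> simp [ha, h] <;> ring
    rw [h2, Finset.sum_ite_mem, Finset.univ_inter, ← Finset.mul_sum, ← Finset.mul_sum]
  have habs : ∀ i : Fin n, |a i| ≤ ((m : ℝ) - 1) / n := by
    intro i
    have hm1 : (1:ℝ) ≤ (m:ℝ) - 1 := by
      have : (2:ℝ) ≤ (m:ℝ) := by exact_mod_cast hm
      linarith
    have hnpos : (0:ℝ) < n := by positivity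
    by_cases h : i ∈ Bs
    · simp only [ha, if_pos h]
      rw [hbm, abs_of_nonneg]
      · rw [div_sub_div_same, le_div_iff₀ hnpos, div_mul_cancel₀]
        exact hn0
      · rw [div_sub_div_same]
        apply div_nonneg _ (le_of_lt hnpos)
        linarith
    · simp only [ha, if_neg h, zero_sub, abs_neg]
      rw [abs_of_nonneg (by positivity)]
      gcongr
  calc norm1M (fun c j => batchGrad x y Bs b W c j - gradCE x y W c j)
      = norm1M (fun c j => ∑ i, a i * sampleGrad (x i) (y i) W c j) := by
        congr 1; funext c j; exact key c j
    _ ≤ ∑ i : Fin n, norm1M (fun c j => a i * sampleGrad (x i) (y i) W c j) :=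
        norm1M_sum_le Finset.univ _
    _ = ∑ i : Fin n, |a i| * norm1M (sampleGrad (x i) (y i) W) := by
        exact Finset.sum_congr rfl fun i _ => norm1M_smul _ _
    _ ≤ ∑ i : Fin n, ((m : ℝ) - 1) / n * (2 * (1 - softmax (logits W (x i)) (y i)) * R) := by
        apply Finset.sum_le_sum
        intro i _
        have hS1 : softmax (logits W (x i)) (y i) ≤ 1 := softmax_le_one hk _ _
        have hnormg : norm1M (sampleGrad (x i) (y i) W)
            ≤ 2 * (1 - softmax (logits W (x i)) (y i)) * R := by
          rw [norm1M_sampleGrad hk]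
          have := hx i
          have hxnn : 0 ≤ norm1V (x i) := Finset.sum_nonneg fun j _ => abs_nonneg _
          nlinarith
        have hmn : (0:ℝ) ≤ ((m : ℝ) - 1) / n := by
          have : (2:ℝ) ≤ (m:ℝ) := by exact_mod_cast hm
          have hnpos : (0:ℝ) < n := by positivity
          apply div_nonneg <;> linarith
        calc |a i| * norm1M (sampleGrad (x i) (y i) W)
            ≤ ((m : ℝ) - 1) / n * norm1M (sampleGrad (x i) (y i) W) := by
              apply mul_le_mul_of_nonneg_right (habs i)
              exact Finset.sum_nonneg fun c _ => Finset.sum_nonneg fun j _ => abs_nonneg _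
          _ ≤ ((m : ℝ) - 1) / n * (2 * (1 - softmax (logits W (x i)) (y i)) * R) :=
              mul_le_mul_of_nonneg_left hnormg hmn
    _ = 2 * ((m : ℝ) - 1) * R * proxyG x y W := by
        unfold proxyG
        simp only [Finset.mul_sum]
        apply Finset.sum_congr rfl
        intro i _
        field_simp

set_option maxHeartbeats 2000000 in
/-- accumulated sampling error of momentum under random reshuffling:
`‖∑_{j=0}^{t} (1−β) β^{t−j} Ξ_j‖₁ ≤ (1−β) m (m² − 1) R · G(W)`, where
`Ξ_j = (1/b)∑_{i∈B_j} gᵢ(W) − D(W)` and within each completed epoch the batches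
partition `{1,…,n}`. -/
theorem momentum_accumulated_noise_bound (n k d : ℕ)
    (hn : 1 ≤ n) (hk : 2 ≤ k) (hd : 1 ≤ d)
    (x : Fin n → Fin d → ℝ) (y : Fin n → Fin k)
    (R : ℝ) (hR : 0 < R) (hx : ∀ i, norm1V (x i) ≤ R)
    (m b : ℕ) (hm : 1 ≤ m) (hb : 1 ≤ b) (hnb : n = m * b)
    (W : Fin k → Fin d → ℝ)
    (β : ℝ) (hβ0 : 0 ≤ β) (hβ1 : β < 1)
    (t : ℕ) (B : ℕ → Finset (Fin n))
    (hBcard : ∀ j, j ≤ t → (B j).card = b)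
    (hdisj : ∀ kk : ℕ, kk + 1 ≤ t / m →
      ∀ l1 l2 : ℕ, l1 < m → l2 < m → l1 ≠ l2 →
        Disjoint (B (kk * m + l1)) (B (kk * m + l2)))
    (hcover : ∀ kk : ℕ, kk + 1 ≤ t / m →
      (Finset.range m).biUnion (fun l => B (kk * m + l)) = Finset.univ) :
    norm1M (fun cc jj => ∑ j ∈ Finset.range (t + 1),
        (1 - β) * β ^ (t - j) * (batchGrad x y (B j) b W cc jj - gradCE x y W cc jj))
      ≤ (1 - β) * (m : ℝ) * ((m : ℝ) ^ 2 - 1) * R * proxyG x y W := by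
  have hk0 : 0 < k := by omega
  have hn0 : 0 < n := by omega
  have hGnn : 0 ≤ proxyG x y W := by
    unfold proxyG
    apply mul_nonneg (by positivity)
    exact Finset.sum_nonneg fun i _ =>
      sub_nonneg.mpr (softmax_le_one hk0 (logits W (x i)) (y i))
  rcases eq_or_lt_of_le hm with hm1 | hm2
  · -- m = 1 : every batch is the whole dataset, all noise terms vanish
    have hbn : b = n := by rw [hnb, ← hm1, one_mul]
    have hXi0 : ∀ j : ℕ, j ≤ t → ∀ cc jj,
        batchGrad x y (B j) b W cc jj - gradCE x y W cc jj = 0 := by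
      intro j hj cc jj
      have hB : B j = Finset.univ := Finset.eq_univ_of_card _ (by
        rw [hBcard j hj, Fintype.card_fin]; omega)
      unfold batchGrad gradCE
      rw [hB, hbn]
      ring
    have hL : (fun cc jj => ∑ j ∈ Finset.range (t + 1),
        (1 - β) * β ^ (t - j) * (batchGrad x y (B j) b W cc jj - gradCE x y W cc jj))
        = fun (_ : Fin k) (_ : Fin d) => (0:ℝ) := by
      funext cc jj
      apply Finset.sum_eq_zero
      intro j hj
      rw [hXi0 j (by simp at hj; omega) cc jj, mul_zero]
    rw [hL]
    have : norm1M (fun (_ : Fin k) (_ : Fin d) => (0:ℝ)) = 0 := by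
      unfold norm1M; simp
    rw [this, ← hm1]
    norm_num
  · -- m ≥ 2
    have hm2' : (2:ℝ) ≤ (m:ℝ) := by exact_mod_cast hm2
    set G := proxyG x y W with hGdef
    set C2 : ℝ := 2 * ((m:ℝ) - 1) * R * G with hC2def
    have hC2nn : 0 ≤ C2 := by
      rw [hC2def]
      apply mul_nonneg (mul_nonneg (by linarith) hR.le) hGnn
    set w : ℕ → ℝ := fun j => (1 - β) * β ^ (t - j) with hwdef
    set Xi : ℕ → Fin k → Fin d → ℝ :=
      fun j cc jj => batchGrad x y (B j) b W cc jj - gradCE x y W cc jj with hXidef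
    have hXib : ∀ j : ℕ, norm1M (Xi j) ≤ C2 := fun j =>
      xi_bound hk0 hn0 x y R hR.le hx m b hm2 hb hnb W (B j)
    set K := t / m with hKdef
    set r := t % m with hrdef
    have htKr : t = K * m + r := by rw [hKdef, hrdef, Nat.div_add_mod']
    have hrm : r < m := Nat.mod_lt t (by omega)
    have hKmt : K * m ≤ t := by omega
    have hbR : (1:ℝ)/b = (m:ℝ) * (1/n) := by
      have hb0 : (b:ℝ) ≠ 0 := Nat.cast_ne_zero.mpr (by omega)
      have hn0' : (n:ℝ) ≠ 0 := Nat.cast_ne_zero.mpr (by omega)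
      field_simp
      rw [hnb]; push_cast; ring
    have hzero : ∀ k', k' < K → ∀ cc jj,
        ∑ l ∈ Finset.range m, Xi (k' * m + l) cc jj = 0 := by
      intro k' hk' cc jj
      have hk'' : k' + 1 ≤ t / m := by omega
      have hdisj' : Set.PairwiseDisjoint ↑(Finset.range m) (fun l => B (k' * m + l)) := by
        intro l1 h1 l2 h2 hne
        exact hdisj k' hk'' l1 l2 (Finset.mem_range.mp h1) (Finset.mem_range.mp h2) hne
      have hb1 : ∑ l ∈ Finset.range m, ∑ i ∈ B (k' * m + l), sampleGrad (x i) (y i) W cc jj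
          = ∑ i, sampleGrad (x i) (y i) W cc jj := by
        rw [← Finset.sum_biUnion hdisj', hcover k' hk'']
      simp only [hXidef]
      unfold batchGrad gradCE
      rw [Finset.sum_sub_distrib, ← Finset.mul_sum, hb1, Finset.sum_const, Finset.card_range,
        nsmul_eq_mul, hbR]
      ring
    have hEp1 : ∀ k' : ℕ, k' < K →
        norm1M (fun cc jj => ∑ l ∈ Finset.range m, w (k' * m + l) * Xi (k' * m + l) cc jj)
          ≤ (1 - β) * β ^ (t - (k' * m + (m - 1))) * ((1 - β) * ((m:ℝ) * ((m:ℝ) - 1) / 2)) * C2 := by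
      intro k' hk'
      have hprod : k' * m + m ≤ K * m := by
        calc k' * m + m = (k' + 1) * m := by ring
          _ ≤ K * m := Nat.mul_le_mul_right m (by omega)
      have hEt : k' * m + (m - 1) ≤ t := by omega
      have hre : (fun cc jj => ∑ l ∈ Finset.range m, w (k' * m + l) * Xi (k' * m + l) cc jj)
          = fun cc jj => ∑ l ∈ Finset.range m,
              (w (k' * m + l) - w (k' * m + (m - 1))) * Xi (k' * m + l) cc jj := by
        funext cc jj
        rw [eq_comm]
        calc ∑ l ∈ Finset.range m,
              (w (k' * m + l) - w (k' * m + (m - 1))) * Xi (k' * m + l) cc jj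
            = (∑ l ∈ Finset.range m, w (k' * m + l) * Xi (k' * m + l) cc jj)
              - w (k' * m + (m - 1)) * ∑ l ∈ Finset.range m, Xi (k' * m + l) cc jj := by
              rw [Finset.mul_sum, ← Finset.sum_sub_distrib]
              exact Finset.sum_congr rfl fun l _ => by ring
          _ = _ := by rw [hzero k' hk' cc jj, mul_zero, sub_zero]
      rw [hre]
      calc norm1M (fun cc jj => ∑ l ∈ Finset.range m,
            (w (k' * m + l) - w (k' * m + (m - 1))) * Xi (k' * m + l) cc jj)
          ≤ ∑ l ∈ Finset.range m, norm1M
              (fun cc jj => (w (k' * m + l) - w (k' * m + (m - 1))) * Xi (k' * m + l) cc jj) :=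
            norm1M_sum_le _ _
        _ = ∑ l ∈ Finset.range m,
              |w (k' * m + l) - w (k' * m + (m - 1))| * norm1M (Xi (k' * m + l)) :=
            Finset.sum_congr rfl fun l _ => norm1M_smul _ _
        _ ≤ ∑ l ∈ Finset.range m,
              ((1 - β) * β ^ (t - (k' * m + (m - 1))) * (1 - β ^ (m - 1 - l))) * C2 := by
            apply Finset.sum_le_sum
            intro l hl
            have hlm : l < m := Finset.mem_range.mp hl
            have hple : β ^ (m - 1 - l) ≤ 1 := pow_le_one₀ hβ0 hβ1.le
            have hpnn : (0:ℝ) ≤ β ^ (t - (k' * m + (m - 1))) := pow_nonneg hβ0 _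
            have habs : |w (k' * m + l) - w (k' * m + (m - 1))|
                = (1 - β) * β ^ (t - (k' * m + (m - 1))) * (1 - β ^ (m - 1 - l)) := by
              have hexp : t - (k' * m + l) = (t - (k' * m + (m - 1))) + (m - 1 - l) := by omega
              simp only [hwdef]
              rw [hexp, pow_add]
              rw [show (1 - β) * (β ^ (t - (k' * m + (m - 1))) * β ^ (m - 1 - l))
                    - (1 - β) * β ^ (t - (k' * m + (m - 1)))
                  = -((1 - β) * β ^ (t - (k' * m + (m - 1))) * (1 - β ^ (m - 1 - l))) by ring]
              rw [abs_neg, abs_of_nonneg]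
              exact mul_nonneg (mul_nonneg (by linarith) hpnn) (by linarith)
            rw [habs]
            apply mul_le_mul_of_nonneg_left (hXib _)
            exact mul_nonneg (mul_nonneg (by linarith) hpnn) (by linarith)
        _ = (1 - β) * β ^ (t - (k' * m + (m - 1))) * C2
              * ∑ l ∈ Finset.range m, (1 - β ^ (m - 1 - l)) := by
            rw [Finset.mul_sum]
            exact Finset.sum_congr rfl fun l _ => by ring
        _ ≤ (1 - β) * β ^ (t - (k' * m + (m - 1))) * C2
              * ((1 - β) * ((m:ℝ) * ((m:ℝ) - 1) / 2)) := by
            apply mul_le_mul_of_nonneg_left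
            · have hrefl : ∑ l ∈ Finset.range m, (1 - β ^ (m - 1 - l))
                  = ∑ l ∈ Finset.range m, (1 - β ^ l) :=
                Finset.sum_range_reflect (fun u => 1 - β ^ u) m
              rw [hrefl]
              calc ∑ l ∈ Finset.range m, (1 - β ^ l)
                  ≤ ∑ l ∈ Finset.range m, (l:ℝ) * (1 - β) :=
                    Finset.sum_le_sum fun l _ => one_sub_pow_le' hβ0 hβ1.le l
                _ = (1 - β) * ((m:ℝ) * ((m:ℝ) - 1) / 2) := by
                    rw [← Finset.sum_mul, gauss']; ring
            · exact mul_nonneg (mul_nonneg (by linarith) (pow_nonneg hβ0 _)) hC2nn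
        _ = (1 - β) * β ^ (t - (k' * m + (m - 1)))
              * ((1 - β) * ((m:ℝ) * ((m:ℝ) - 1) / 2)) * C2 := by ring
    have hEpoch : norm1M (fun cc jj => ∑ j ∈ Finset.range (K * m), w j * Xi j cc jj)
        ≤ (1 - β) * β ^ (r + 1) * ((m:ℝ) * ((m:ℝ) - 1) / 2) * C2 := by
      calc norm1M (fun cc jj => ∑ j ∈ Finset.range (K * m), w j * Xi j cc jj)
          = norm1M (fun cc jj => ∑ k' ∈ Finset.range K, ∑ l ∈ Finset.range m,
              w (k' * m + l) * Xi (k' * m + l) cc jj) := by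
            congr 1; funext cc jj
            exact sum_range_mul' (fun j => w j * Xi j cc jj) K m
        _ ≤ ∑ k' ∈ Finset.range K, norm1M (fun cc jj => ∑ l ∈ Finset.range m,
              w (k' * m + l) * Xi (k' * m + l) cc jj) := norm1M_sum_le _ _
        _ ≤ ∑ k' ∈ Finset.range K, (1 - β) * β ^ (t - (k' * m + (m - 1)))
              * ((1 - β) * ((m:ℝ) * ((m:ℝ) - 1) / 2)) * C2 :=
            Finset.sum_le_sum fun k' hk' => hEp1 k' (Finset.mem_range.mp hk')
        _ ≤ ∑ k' ∈ Finset.range K, (1 - β) * (β ^ (r + 1) * β ^ (K - 1 - k'))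
              * ((1 - β) * ((m:ℝ) * ((m:ℝ) - 1) / 2)) * C2 := by
            apply Finset.sum_le_sum
            intro k' hk'
            have hk'K : k' < K := Finset.mem_range.mp hk'
            have hprod : k' * m + m ≤ K * m := by
              calc k' * m + m = (k' + 1) * m := by ring
                _ ≤ K * m := Nat.mul_le_mul_right m (by omega)
            have h2 : K - 1 - k' ≤ (K - 1 - k') * m := Nat.le_mul_of_pos_right _ (by omega)
            have h3 : (K - 1 - k') * m = K * m - (k' * m + m) := by
              rw [show K - 1 - k' = K - (k' + 1) by omega, Nat.sub_mul, add_mul, one_mul]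
            have hle : (r + 1) + (K - 1 - k') ≤ t - (k' * m + (m - 1)) := by omega
            have hpow : β ^ (t - (k' * m + (m - 1))) ≤ β ^ ((r + 1) + (K - 1 - k')) :=
              pow_le_pow_of_le_one hβ0 hβ1.le hle
            rw [pow_add] at hpow
            have hmm2 : (0:ℝ) ≤ (m:ℝ) * ((m:ℝ) - 1) / 2 := by nlinarith
            have hfac : (0:ℝ) ≤ (1 - β) * ((1 - β) * ((m:ℝ) * ((m:ℝ) - 1) / 2)) * C2 :=
              mul_nonneg (mul_nonneg (by linarith)
                (mul_nonneg (by linarith) hmm2)) hC2nn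
            nlinarith [mul_le_mul_of_nonneg_left hpow hfac]
        _ = ((1 - β) * β ^ (r + 1) * ((1 - β) * ((m:ℝ) * ((m:ℝ) - 1) / 2)) * C2)
              * ∑ k' ∈ Finset.range K, β ^ (K - 1 - k') := by
            rw [Finset.mul_sum]
            exact Finset.sum_congr rfl fun k' _ => by ring
        _ = ((1 - β) * β ^ (r + 1) * ((1 - β) * ((m:ℝ) * ((m:ℝ) - 1) / 2)) * C2)
              * ∑ u ∈ Finset.range K, β ^ u := by
            rw [Finset.sum_range_reflect (fun u => β ^ u) K]
        _ ≤ (1 - β) * β ^ (r + 1) * ((m:ℝ) * ((m:ℝ) - 1) / 2) * C2 := by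
            have hS : (1 - β) * ∑ u ∈ Finset.range K, β ^ u ≤ 1 := by
              rw [geom']; nlinarith [pow_nonneg hβ0 K]
            have hSnn : (0:ℝ) ≤ ∑ u ∈ Finset.range K, β ^ u :=
              Finset.sum_nonneg fun u _ => pow_nonneg hβ0 u
            have hmm2 : (0:ℝ) ≤ (m:ℝ) * ((m:ℝ) - 1) / 2 := by nlinarith
            have hP : (0:ℝ) ≤ (1 - β) * β ^ (r + 1) * ((m:ℝ) * ((m:ℝ) - 1) / 2) * C2 :=
              mul_nonneg (mul_nonneg (mul_nonneg (by linarith)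
                (pow_nonneg hβ0 _)) hmm2) hC2nn
            nlinarith [mul_le_mul_of_nonneg_left hS hP]
    have hTail : norm1M (fun cc jj => ∑ j ∈ Finset.Ico (K * m) (t + 1), w j * Xi j cc jj)
        ≤ (1 - β ^ (r + 1)) * C2 := by
      calc norm1M (fun cc jj => ∑ j ∈ Finset.Ico (K * m) (t + 1), w j * Xi j cc jj)
          ≤ ∑ j ∈ Finset.Ico (K * m) (t + 1), norm1M (fun cc jj => w j * Xi j cc jj) :=
            norm1M_sum_le _ _
        _ = ∑ j ∈ Finset.Ico (K * m) (t + 1), |w j| * norm1M (Xi j) :=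
            Finset.sum_congr rfl fun j _ => norm1M_smul _ _
        _ ≤ ∑ j ∈ Finset.Ico (K * m) (t + 1), ((1 - β) * β ^ (t - j)) * C2 := by
            apply Finset.sum_le_sum
            intro j _
            have hwnn : (0:ℝ) ≤ (1 - β) * β ^ (t - j) :=
              mul_nonneg (by linarith) (pow_nonneg hβ0 _)
            simp only [hwdef]
            rw [abs_of_nonneg hwnn]
            exact mul_le_mul_of_nonneg_left (hXib j) hwnn
        _ = (1 - β) * C2 * ∑ j ∈ Finset.Ico (K * m) (t + 1), β ^ (t - j) := by
            rw [Finset.mul_sum]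
            exact Finset.sum_congr rfl fun j _ => by ring
        _ = (1 - β) * C2 * ∑ s ∈ Finset.range (r + 1), β ^ s := by
            congr 1
            rw [Finset.sum_Ico_eq_sum_range,
              show t + 1 - K * m = r + 1 by omega,
              ← Finset.sum_range_reflect (fun s => β ^ s) (r + 1)]
            apply Finset.sum_congr rfl
            intro s hs
            have hsr : s < r + 1 := Finset.mem_range.mp hs
            congr 1
            omega
        _ = (1 - β ^ (r + 1)) * C2 := by
            have hg := geom' (β := β) (r + 1)
            linear_combination C2 * hg
    have hfinal : (1 - β) * β ^ (r + 1) * ((m:ℝ) * ((m:ℝ) - 1) / 2) * C2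
        + (1 - β ^ (r + 1)) * C2 ≤ (1 - β) * (m : ℝ) * ((m : ℝ) ^ 2 - 1) * R * G := by
      have hq0 : (0:ℝ) ≤ β ^ (r + 1) := pow_nonneg hβ0 _
      have hq1 : β ^ (r + 1) ≤ 1 := pow_le_one₀ hβ0 hβ1.le
      have hrm' : ((r:ℝ) + 1) ≤ (m:ℝ) := by exact_mod_cast hrm
      have hRG : (0:ℝ) ≤ R * G := mul_nonneg hR.le hGnn
      have hc : (0:ℝ) ≤ 1 - β := by linarith
      have h1q : 1 - β ^ (r + 1) ≤ ((r:ℝ) + 1) * (1 - β) := by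
        have := one_sub_pow_le' hβ0 hβ1.le (r + 1)
        push_cast at this
        linarith
      have h5 : 1 - β ^ (r + 1) ≤ (m:ℝ) * (1 - β) := by nlinarith
      have h2m : (0:ℝ) ≤ 2 * ((m:ℝ) - 1) * (R * G) :=
        mul_nonneg (by linarith) hRG
      have hA := mul_le_mul_of_nonneg_left h5 h2m
      have hXnn : (0:ℝ) ≤ (1 - β) * (m:ℝ) * ((m:ℝ) - 1) * (R * G) * ((m:ℝ) - 1) :=
        mul_nonneg (mul_nonneg (mul_nonneg (mul_nonneg hc (by linarith)) (by linarith)) hRG)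
          (by linarith)
      have hB := mul_le_mul_of_nonneg_left hq1 hXnn
      rw [hC2def]
      nlinarith [hA, hB]
    calc norm1M (fun cc jj => ∑ j ∈ Finset.range (t + 1),
          (1 - β) * β ^ (t - j) * (batchGrad x y (B j) b W cc jj - gradCE x y W cc jj))
        = norm1M (fun cc jj => (∑ j ∈ Finset.range (K * m), w j * Xi j cc jj)
            + ∑ j ∈ Finset.Ico (K * m) (t + 1), w j * Xi j cc jj) := by
          congr 1
          funext cc jj
          simp only [hwdef, hXidef]
          rw [Finset.range_eq_Ico,
            ← Finset.sum_Ico_consecutive _ (Nat.zero_le (K * m)) (by omega : K * m ≤ t + 1),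
            ← Finset.range_eq_Ico]
      _ ≤ norm1M (fun cc jj => ∑ j ∈ Finset.range (K * m), w j * Xi j cc jj)
          + norm1M (fun cc jj => ∑ j ∈ Finset.Ico (K * m) (t + 1), w j * Xi j cc jj) :=
          norm1M_add_le _ _
      _ ≤ (1 - β) * β ^ (r + 1) * ((m:ℝ) * ((m:ℝ) - 1) / 2) * C2 + (1 - β ^ (r + 1)) * C2 :=
          add_le_add hEpoch hTail
      _ ≤ (1 - β) * (m : ℝ) * ((m : ℝ) ^ 2 - 1) * R * G := hfinal
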